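/- For every s ∈ ℤ, the linear map θ_s on 𝔫𝔴̂_{k,b} determined by θ_s(J⁺_n) = J⁺_{n+s}, θ_s(J⁻_n) = J⁻_{n−s}, θ_s(J_n) = J_n, θ_s(T_n) = T_n − is(k/2) δ_{n,0} K, θ_s(K) = K is a Lie algebra automorphism (the spectral flow automorphism), and θ_s ∘ θ_t = θ_{s+t} for all s, t ∈ ℤ. -/

import Mathlib

/-!
The affine Nappi–Witten algebra `𝔫𝔴̂_{k,b}`, for `k ∈ ℝ \ {0}` and `b ∈ ℝ`: the
complex vector space with basis `{J⁺_n, J⁻_n, J_n, T_n : n ∈ ℤ} ∪ {K}` (modelled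
as finitely supported functions on the type `Gen` of basis symbols), with the
bilinear bracket determined by `[J⁺_m, J⁻_n] = 2iT_{m+n} + km δ_{m+n,0} K`,
`[J_m, J⁺_n] = iJ⁺_{m+n}`, `[J_m, J⁻_n] = −iJ⁻_{m+n}`, `[J_m, T_n] = (k/2)m δ_{m+n,0} K`,
`[J_m, J_n] = (kb/2)m δ_{m+n,0} K`, `K` central, all other brackets of basis elements zero.
-/

/-- Basis symbols of the affine Nappi–Witten algebra. -/
inductive Gen : Type
  | Jp : ℤ → Gen
  | Jm : ℤ → Gen
  | J : ℤ → Gen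
  | T : ℤ → Gen
  | K : Gen
  deriving DecidableEq

/-- The underlying vector space of `𝔫𝔴̂_{k,b}`: formal finite ℂ-linear
combinations of the basis symbols. -/
abbrev ANW : Type := Gen →₀ ℂ

/-- The basis vector corresponding to a basis symbol. -/
noncomputable def e (g : Gen) : ANW := Finsupp.single g 1

/-- The bracket on basis symbols (antisymmetrized as indicated in the paper). -/
noncomputable def genBracket (k b : ℝ) : Gen → Gen → ANW
  | Gen.Jp m, Gen.Jm n =>
      (2 * Complex.I) • e (Gen.T (m + n)) +
        (if m + n = 0 then ((k : ℂ) * (m : ℂ)) • e Gen.K else 0)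
  | Gen.Jm m, Gen.Jp n =>
      -((2 * Complex.I) • e (Gen.T (m + n)) +
        (if m + n = 0 then ((k : ℂ) * (n : ℂ)) • e Gen.K else 0))
  | Gen.J m, Gen.Jp n => Complex.I • e (Gen.Jp (m + n))
  | Gen.Jp m, Gen.J n => -(Complex.I • e (Gen.Jp (m + n)))
  | Gen.J m, Gen.Jm n => (-Complex.I) • e (Gen.Jm (m + n))
  | Gen.Jm m, Gen.J n => Complex.I • e (Gen.Jm (m + n))
  | Gen.J m, Gen.T n => if m + n = 0 then (((k / 2 : ℝ) : ℂ) * (m : ℂ)) • e Gen.K else 0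
  | Gen.T m, Gen.J n => if m + n = 0 then -((((k / 2 : ℝ) : ℂ) * (n : ℂ)) • e Gen.K) else 0
  | Gen.J m, Gen.J n => if m + n = 0 then (((k * b / 2 : ℝ) : ℂ) * (m : ℂ)) • e Gen.K else 0
  | _, _ => 0

/-- The bilinear extension of `genBracket` to all of `𝔫𝔴̂_{k,b}`. -/
noncomputable def affBracket (k b : ℝ) (u v : ANW) : ANW :=
  u.sum fun g₁ c₁ => v.sum fun g₂ c₂ => (c₁ * c₂) • genBracket k b g₁ g₂


/-- The spectral flow `θ_s` on basis symbols:
`J⁺_n ↦ J⁺_{n+s}`, `J⁻_n ↦ J⁻_{n−s}`, `J_n ↦ J_n`,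
`T_n ↦ T_n − is(k/2) δ_{n,0} K`, `K ↦ K`. -/
noncomputable def genFlow (k : ℝ) (s : ℤ) : Gen → ANW
  | Gen.Jp n => e (Gen.Jp (n + s))
  | Gen.Jm n => e (Gen.Jm (n - s))
  | Gen.J n => e (Gen.J n)
  | Gen.T n =>
      e (Gen.T n) - (if n = 0 then (Complex.I * (s : ℂ) * ((k : ℂ) / 2)) • e Gen.K else 0)
  | Gen.K => e Gen.K

/-- The linear extension of `genFlow` to all of `𝔫𝔴̂_{k,b}`. -/
noncomputable def flow (k : ℝ) (s : ℤ) (u : ANW) : ANW :=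
  u.sum fun g c => c • genFlow k s g
section SpectralFlowAux

open Finsupp

lemma flow_single (k : ℝ) (s : ℤ) (g : Gen) (c : ℂ) :
    flow k s (Finsupp.single g c) = c • genFlow k s g :=
  Finsupp.sum_single_index (zero_smul _ _)

lemma flow_e (k : ℝ) (s : ℤ) (g : Gen) : flow k s (e g) = genFlow k s g := by
  rw [e, flow_single, one_smul]

lemma flow_zero (k : ℝ) (s : ℤ) : flow k s 0 = 0 := Finsupp.sum_zero_index

lemma flow_add (k : ℝ) (s : ℤ) (u v : ANW) :
    flow k s (u + v) = flow k s u + flow k s v :=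
  Finsupp.sum_add_index' (fun g => zero_smul _ _) (fun g c₁ c₂ => add_smul c₁ c₂ _)

lemma flow_smul (k : ℝ) (s : ℤ) (c : ℂ) (u : ANW) :
    flow k s (c • u) = c • flow k s u := by
  unfold flow
  rw [Finsupp.sum_smul_index' (h := fun g c => c • genFlow k s g) (fun g => zero_smul _ _), Finsupp.smul_sum]
  exact Finsupp.sum_congr fun g _ => by rw [smul_eq_mul, mul_smul]

lemma flow_neg (k : ℝ) (s : ℤ) (u : ANW) : flow k s (-u) = -flow k s u := by
  rw [← neg_one_smul ℂ u, flow_smul, neg_one_smul]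

lemma flow_sub (k : ℝ) (s : ℤ) (u v : ANW) :
    flow k s (u - v) = flow k s u - flow k s v := by
  rw [sub_eq_add_neg, flow_add, flow_neg, sub_eq_add_neg]

lemma flow_ite (k : ℝ) (s : ℤ) (P : Prop) [Decidable P] (x : ANW) :
    flow k s (if P then x else 0) = if P then flow k s x else 0 := by
  split_ifs <;> simp [flow_zero]

lemma affBracket_single_single (k b : ℝ) (g₁ g₂ : Gen) (c₁ c₂ : ℂ) :
    affBracket k b (Finsupp.single g₁ c₁) (Finsupp.single g₂ c₂) =
      (c₁ * c₂) • genBracket k b g₁ g₂ := by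
  unfold affBracket
  rw [Finsupp.sum_single_index, Finsupp.sum_single_index]
  · simp
  · simp

lemma affBracket_e_e (k b : ℝ) (g₁ g₂ : Gen) :
    affBracket k b (e g₁) (e g₂) = genBracket k b g₁ g₂ := by
  rw [e, e, affBracket_single_single, one_mul, one_smul]

lemma affBracket_zero_left (k b : ℝ) (v : ANW) : affBracket k b 0 v = 0 :=
  Finsupp.sum_zero_index

lemma affBracket_zero_right (k b : ℝ) (u : ANW) : affBracket k b u 0 = 0 := by
  unfold affBracket
  simp [Finsupp.sum_zero_index]

lemma affBracket_add_left (k b : ℝ) (u₁ u₂ v : ANW) :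
    affBracket k b (u₁ + u₂) v = affBracket k b u₁ v + affBracket k b u₂ v := by
  unfold affBracket
  refine Finsupp.sum_add_index' (fun g => by simp) (fun g c₁ c₂ => ?_)
  rw [← Finsupp.sum_add]
  exact Finsupp.sum_congr fun g' _ => by rw [add_mul, add_smul]

lemma affBracket_add_right (k b : ℝ) (u v₁ v₂ : ANW) :
    affBracket k b u (v₁ + v₂) = affBracket k b u v₁ + affBracket k b u v₂ := by
  unfold affBracket
  rw [← Finsupp.sum_add]
  refine Finsupp.sum_congr fun g _ => ?_
  refine Finsupp.sum_add_index' (fun g' => by simp) (fun g' d₁ d₂ => by rw [mul_add, add_smul])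

lemma affBracket_smul_left (k b : ℝ) (c : ℂ) (u v : ANW) :
    affBracket k b (c • u) v = c • affBracket k b u v := by
  unfold affBracket
  rw [Finsupp.sum_smul_index'
      (h := fun g₁ c₁ => v.sum fun g₂ c₂ => (c₁ * c₂) • genBracket k b g₁ g₂)
      (fun g => by simp), Finsupp.smul_sum]
  refine Finsupp.sum_congr fun g _ => ?_
  rw [Finsupp.smul_sum]
  exact Finsupp.sum_congr fun g' _ => by rw [smul_eq_mul, mul_assoc, mul_smul]

lemma affBracket_smul_right (k b : ℝ) (c : ℂ) (u v : ANW) :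
    affBracket k b u (c • v) = c • affBracket k b u v := by
  unfold affBracket
  rw [Finsupp.smul_sum]
  refine Finsupp.sum_congr fun g _ => ?_
  rw [Finsupp.sum_smul_index'
      (h := fun g₂ c₂ => (u g * c₂) • genBracket k b g g₂)
      (fun g' => by simp), Finsupp.smul_sum]
  refine Finsupp.sum_congr fun g' _ => ?_
  rw [smul_eq_mul, smul_smul]
  congr 1
  ring

lemma affBracket_neg_right (k b : ℝ) (u v : ANW) :
    affBracket k b u (-v) = -affBracket k b u v := by
  rw [← neg_one_smul ℂ v, affBracket_smul_right, neg_one_smul]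

lemma affBracket_neg_left (k b : ℝ) (u v : ANW) :
    affBracket k b (-u) v = -affBracket k b u v := by
  rw [← neg_one_smul ℂ u, affBracket_smul_left, neg_one_smul]

lemma affBracket_sub_right (k b : ℝ) (u v w : ANW) :
    affBracket k b u (v - w) = affBracket k b u v - affBracket k b u w := by
  rw [sub_eq_add_neg, affBracket_add_right, affBracket_neg_right, sub_eq_add_neg]

lemma affBracket_sub_left (k b : ℝ) (u v w : ANW) :
    affBracket k b (u - v) w = affBracket k b u w - affBracket k b v w := by
  rw [sub_eq_add_neg, affBracket_add_left, affBracket_neg_left, sub_eq_add_neg]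

lemma affBracket_ite_right (k b : ℝ) (u : ANW) (P : Prop) [Decidable P] (x : ANW) :
    affBracket k b u (if P then x else 0) = if P then affBracket k b u x else 0 := by
  split_ifs <;> simp [affBracket_zero_right]

lemma affBracket_ite_left (k b : ℝ) (v : ANW) (P : Prop) [Decidable P] (x : ANW) :
    affBracket k b (if P then x else 0) v = if P then affBracket k b x v else 0 := by
  split_ifs <;> simp [affBracket_zero_left]

end SpectralFlowAux

lemma genFlow_bracket (k b : ℝ) (s : ℤ) (g₁ g₂ : Gen) :
    flow k s (genBracket k b g₁ g₂) = affBracket k b (genFlow k s g₁) (genFlow k s g₂) := by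
  cases g₁ <;> cases g₂ <;>
    simp only [genBracket, genFlow, flow_add, flow_smul, flow_neg, flow_sub, flow_e, flow_zero,
      flow_ite, affBracket_e_e, affBracket_sub_left, affBracket_sub_right,
      affBracket_smul_left, affBracket_smul_right, affBracket_zero_left, affBracket_zero_right,
      affBracket_ite_left, affBracket_ite_right, smul_zero, sub_zero, neg_zero, ite_self]
  case Jp.Jm m n =>
    have h1 : m + s + (n - s) = m + n := by ring
    rw [h1]
    by_cases h : m + n = 0 <;> simp only [h, if_true, if_false, genBracket, smul_zero, sub_zero]
    push_cast
    rw [smul_sub, smul_smul, sub_add_eq_add_sub, add_sub_assoc, ← sub_smul]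
    congr 1
    congr 1
    linear_combination (-(k : ℂ) * (s : ℂ)) * Complex.I_sq
  case Jm.Jp m n =>
    have h1 : m - s + (n + s) = m + n := by ring
    rw [h1]
    by_cases h : m + n = 0 <;> simp only [h, if_true, if_false, genBracket, smul_zero, sub_zero]
    push_cast
    rw [smul_sub, smul_smul, neg_inj, sub_add_eq_add_sub, add_sub_assoc, ← sub_smul]
    congr 1
    congr 1
    linear_combination (-(k : ℂ) * (s : ℂ)) * Complex.I_sq
  case Jp.J m n =>
    have h1 : m + s + n = m + n + s := by ring
    rw [h1]
  case Jm.J m n =>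
    have h1 : m - s + n = m + n - s := by ring
    rw [h1]
  case J.Jp m n =>
    have h1 : m + (n + s) = m + n + s := by ring
    rw [h1]
  case J.Jm m n =>
    have h1 : m + (n - s) = m + n - s := by ring
    rw [h1]

lemma genFlow_flow (k : ℝ) (s t : ℤ) (g : Gen) :
    flow k s (genFlow k t g) = genFlow k (s + t) g := by
  cases g <;>
    simp only [genFlow, flow_e, flow_sub, flow_smul, flow_ite, flow_zero, genFlow]
  case Jp n => rw [show n + t + s = n + (s + t) by ring]
  case Jm n => rw [show n - t - s = n - (s + t) by ring]
  case T n =>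
    by_cases h : n = 0 <;> simp only [h, if_true, if_false, sub_zero]
    rw [sub_sub, ← add_smul]
    congr 1
    push_cast
    ring

lemma flow_flow (k : ℝ) (s t : ℤ) (u : ANW) :
    flow k s (flow k t u) = flow k (s + t) u := by
  induction u using Finsupp.induction_linear with
  | zero => simp [flow_zero]
  | add f g hf hg => rw [flow_add, flow_add, flow_add, hf, hg]
  | single g c => rw [flow_single, flow_smul, genFlow_flow, flow_single]

lemma flow_zero_flow (k : ℝ) (u : ANW) : flow k 0 u = u := by
  induction u using Finsupp.induction_linear with
  | zero => simp [flow_zero]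
  | add f g hf hg => rw [flow_add, hf, hg]
  | single g c =>
      rw [flow_single]
      have : genFlow k 0 g = e g := by
        cases g <;> simp [genFlow]
      rw [this, e, Finsupp.smul_single, smul_eq_mul, mul_one]

lemma flow_bracket (k b : ℝ) (s : ℤ) (u v : ANW) :
    flow k s (affBracket k b u v) = affBracket k b (flow k s u) (flow k s v) := by
  induction u using Finsupp.induction_linear with
  | zero => rw [affBracket_zero_left, flow_zero, affBracket_zero_left]
  | add f g hf hg =>
      rw [affBracket_add_left, flow_add, hf, hg, flow_add, affBracket_add_left]
  | single g₁ c₁ =>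
      induction v using Finsupp.induction_linear with
      | zero => rw [affBracket_zero_right, flow_zero, affBracket_zero_right]
      | add f g hf hg =>
          rw [affBracket_add_right, flow_add, hf, hg, flow_add, affBracket_add_right]
      | single g₂ c₂ =>
          rw [affBracket_single_single, flow_smul, flow_single, flow_single,
            affBracket_smul_left, affBracket_smul_right, genFlow_bracket, smul_smul]


/-- For every `s ∈ ℤ`, the spectral flow `θ_s` is a Lie algebra automorphism of
`𝔫𝔴̂_{k,b}` (linear, bijective, bracket preserving), and `θ_s ∘ θ_t = θ_{s+t}`
for all `s, t ∈ ℤ`. -/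
theorem spectral_flow_automorphism (k b : ℝ) (hk : k ≠ 0) (s : ℤ) :
    (∀ u v : ANW, flow k s (u + v) = flow k s u + flow k s v) ∧
    (∀ (c : ℂ) (u : ANW), flow k s (c • u) = c • flow k s u) ∧
    Function.Bijective (flow k s) ∧
    (∀ u v : ANW, flow k s (affBracket k b u v) = affBracket k b (flow k s u) (flow k s v)) ∧
    (∀ (t : ℤ) (u : ANW), flow k s (flow k t u) = flow k (s + t) u) := by
  refine ⟨flow_add k s, flow_smul k s, ?_, flow_bracket k b s, fun t u => flow_flow k s t u⟩
  refine Function.bijective_iff_has_inverse.mpr ⟨flow k (-s), fun u => ?_, fun u => ?_⟩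
  · rw [flow_flow, neg_add_cancel, flow_zero_flow]
  · rw [flow_flow, add_neg_cancel, flow_zero_flow]
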